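/- Let bsm_n be the number of bilaterally symmetric matchings on [2n]. Then Σ_{n≥0} bsm_n t^n/n! = exp(t + t²) as formal power series over ℚ; equivalently, for every n ≥ 0, bsm_n equals n! times the coefficient of t^n in exp(t + t²). -/

import Mathlib

set_option linter.unusedSectionVars false
set_option linter.unusedVariables false


open scoped BigOperators

/-- A matching on `[2n] = Fin (2n)` encoded as a fixed-point-free involution: the
arcs of the matching are the pairs `{i, f i}`. -/
def IsMatchingInv {m : ℕ} (f : Equiv.Perm (Fin m)) : Prop :=
  ∀ i, f (f i) = i ∧ f i ≠ i

/-- The matching is bilaterally symmetric: it equals its reflection in the vertical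
axis, i.e. `(i,j)` is an arc iff `(2n+1-j, 2n+1-i)` is (via `Fin.rev`). -/
def IsBilatSym {m : ℕ} (f : Equiv.Perm (Fin m)) : Prop :=
  ∀ i, f i.rev = (f i).rev

/-- The matching `f` has a `k`-crossing: arcs `(i₁,j₁),…,(i_k,j_k)` with
`i₁ < ⋯ < i_k < j₁ < ⋯ < j_k`. -/
def HasCrossing {m : ℕ} (f : Equiv.Perm (Fin m)) (k : ℕ) : Prop :=
  ∃ a b : Fin k → Fin m, StrictMono a ∧ StrictMono b ∧
    (∀ s t : Fin k, a s < b t) ∧ ∀ s, f (a s) = b s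

/-- `bsm_n(d)`: the number of bilaterally symmetric `(d+1)`-noncrossing matchings
on `[2n]`. -/
noncomputable def bsmCount (n d : ℕ) : ℕ :=
  Nat.card {f : Equiv.Perm (Fin (2 * n)) //
    IsMatchingInv f ∧ IsBilatSym f ∧ ¬ HasCrossing f (d + 1)}

/-- The formal power series `exp(t + t²)` over `ℚ`; its `n`-th coefficient is
`Σ_{a + 2b = n} 1/(a! b!)`. -/
noncomputable def expXplusX2 : PowerSeries ℚ :=
  PowerSeries.mk fun n =>
    ∑ b ∈ Finset.range (n + 1),
      if 2 * b ≤ n then (1 : ℚ) / ((n - 2 * b).factorial * b.factorial) else 0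

namespace BsmAux


def SymFun (m : ℕ) : Type :=
  {u : Fin m → Fin m // Function.Involutive u ∧ (∀ i, u i ≠ i) ∧ ∀ i, u i.rev = (u i).rev}

instance (m : ℕ) : Finite (SymFun m) := by unfold SymFun; infer_instance

lemma card_eq (m : ℕ) :
    Nat.card {f : Equiv.Perm (Fin m) // IsMatchingInv f ∧ IsBilatSym f} = Nat.card (SymFun m) := by
  refine Nat.card_eq_of_bijective
    (fun f => ⟨(f.1 : Fin m → Fin m), fun i => (f.2.1 i).1, fun i => (f.2.1 i).2, f.2.2⟩) ⟨?_, ?_⟩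
  · intro f g h
    exact Subtype.ext (Equiv.coe_fn_injective (congrArg Subtype.val h))
  · intro u
    refine ⟨⟨u.2.1.toPerm, fun i => ⟨u.2.1 i, u.2.2.1 i⟩, u.2.2.2⟩, rfl⟩

lemma card_zero : Nat.card (SymFun 0) = 1 := by
  rw [Nat.card_eq_one_iff_unique]
  constructor
  · constructor
    intro u v
    apply Subtype.ext; funext i; exact i.elim0
  · exact ⟨⟨id, fun i => i.elim0, fun i => i.elim0, fun i => i.elim0⟩⟩

lemma symfun_two_eq (u : SymFun 2) (i : Fin 2) : u.1 i = i.rev := by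
  have h1 := u.2.2.1 i
  have h2 := (u.1 i).isLt
  have h3 := i.isLt
  apply Fin.ext
  rw [Fin.val_rev]
  omega

lemma card_two : Nat.card (SymFun 2) = 1 := by
  rw [Nat.card_eq_one_iff_unique]
  constructor
  · constructor
    intro u v
    apply Subtype.ext; funext i; rw [symfun_two_eq u i, symfun_two_eq v i]
  · refine ⟨⟨Fin.rev, Fin.rev_involutive, fun i => ?_, fun i => rfl⟩⟩
    have := i.isLt
    intro h
    have := congrArg Fin.val h
    rw [Fin.val_rev] at this
    omega



/-- order-preserving insertion of {0..2n-1} into {1..2n+2} \ {a,b} -/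
def insF (a b v : ℕ) : ℕ := if v + 1 < a then v + 1 else if v + 2 < b then v + 2 else v + 3
def delF (a b w : ℕ) : ℕ := if w < a then w - 1 else if w < b then w - 2 else w - 3

section InsDel
variable {n a b : ℕ} (ha : 1 ≤ a) (hb : b ≤ 2*n+2) (hab : a < b) (hs : a + b = 2*n+3)
include ha hb hab hs

lemma ins_bounds {v : ℕ} (hv : v < 2*n) :
    1 ≤ insF a b v ∧ insF a b v ≤ 2*n+2 ∧ insF a b v ≠ a ∧ insF a b v ≠ b := by
  unfold insF; split_ifs <;> omega

lemma del_ins {v : ℕ} (hv : v < 2*n) : delF a b (insF a b v) = v := by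
  unfold insF delF; split_ifs <;> omega

lemma del_bounds {w : ℕ} (hw1 : 1 ≤ w) (hw2 : w ≤ 2*n+2) (hwa : w ≠ a) (hwb : w ≠ b) :
    delF a b w < 2*n := by
  unfold delF; split_ifs <;> omega

lemma ins_del {w : ℕ} (hw1 : 1 ≤ w) (hw2 : w ≤ 2*n+2) (hwa : w ≠ a) (hwb : w ≠ b) :
    insF a b (delF a b w) = w := by
  unfold insF delF; split_ifs <;> omega

lemma ins_rev {v : ℕ} (hv : v < 2*n) : insF a b (2*n - 1 - v) = 2*n + 3 - insF a b v := by
  unfold insF; split_ifs <;> omega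

lemma del_rev {w : ℕ} (hw1 : 1 ≤ w) (hw2 : w ≤ 2*n+2) (hwa : w ≠ a) (hwb : w ≠ b) :
    delF a b (2*n+3-w) = 2*n - 1 - delF a b w := by
  unfold delF; split_ifs <;> omega

end InsDel

variable {n : ℕ}

def Jv (n : ℕ) (j : Fin (2*n+2)) : ℕ := j.val + 1
def Kv (n : ℕ) (j : Fin (2*n+2)) : ℕ := 2*n+2 - j.val
def av (n : ℕ) (j : Fin (2*n+2)) : ℕ := min (Jv n j) (Kv n j)
def bv (n : ℕ) (j : Fin (2*n+2)) : ℕ := max (Jv n j) (Kv n j)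

lemma jk (n : ℕ) (j : Fin (2*n+2)) :
    1 ≤ av n j ∧ bv n j ≤ 2*n+2 ∧ av n j < bv n j ∧ av n j + bv n j = 2*n+3 ∧
    1 ≤ Jv n j ∧ Jv n j ≤ 2*n+2 ∧ 1 ≤ Kv n j ∧ Kv n j ≤ 2*n+2 ∧ Jv n j ≠ Kv n j ∧
    Jv n j + Kv n j = 2*n+3 ∧
    ((av n j = Jv n j ∧ bv n j = Kv n j) ∨ (av n j = Kv n j ∧ bv n j = Jv n j)) := by
  have := j.isLt
  unfold av bv Jv Kv
  omega

def extB (n : ℕ) (j : Fin (2*n+2)) (g : Fin (2*n) → Fin (2*n)) :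
    Fin (2*n+4) → Fin (2*n+4) := fun i =>
  if i.val = 0 then ⟨Jv n j, by unfold Jv; have := j.isLt; omega⟩
  else if i.val = Jv n j then ⟨0, by omega⟩
  else if i.val = 2*n+3 then ⟨Kv n j, by unfold Kv; omega⟩
  else if i.val = Kv n j then ⟨2*n+3, by omega⟩
  else if h5 : delF (av n j) (bv n j) i.val < 2*n then
    ⟨insF (av n j) (bv n j) (g ⟨delF (av n j) (bv n j) i.val, h5⟩).val, by
      obtain ⟨p1, p2, p3, p4, -⟩ := jk n j
      have := (ins_bounds p1 p2 p3 p4 (g ⟨delF (av n j) (bv n j) i.val, h5⟩).isLt).2.1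
      omega⟩
  else i

lemma extB_zero (j : Fin (2*n+2)) (g : Fin (2*n) → Fin (2*n)) {i : Fin (2*n+4)}
    (h : i.val = 0) : (extB n j g i).val = Jv n j := by
  simp only [extB, if_pos h]

lemma extB_J (j : Fin (2*n+2)) (g : Fin (2*n) → Fin (2*n)) {i : Fin (2*n+4)}
    (h : i.val = Jv n j) : (extB n j g i).val = 0 := by
  obtain ⟨p1, p2, p3, p4, q1, q2, q3, q4, q5, q6, q7⟩ := jk n j
  simp only [extB, if_neg (show ¬ i.val = 0 by omega), if_pos h]

lemma extB_last (j : Fin (2*n+2)) (g : Fin (2*n) → Fin (2*n)) {i : Fin (2*n+4)}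
    (h : i.val = 2*n+3) : (extB n j g i).val = Kv n j := by
  obtain ⟨p1, p2, p3, p4, q1, q2, q3, q4, q5, q6, q7⟩ := jk n j
  simp only [extB, if_neg (show ¬ i.val = 0 by omega),
    if_neg (show ¬ i.val = Jv n j by omega), if_pos h]

lemma extB_K (j : Fin (2*n+2)) (g : Fin (2*n) → Fin (2*n)) {i : Fin (2*n+4)}
    (h : i.val = Kv n j) : (extB n j g i).val = 2*n+3 := by
  obtain ⟨p1, p2, p3, p4, q1, q2, q3, q4, q5, q6, q7⟩ := jk n j
  simp only [extB, if_neg (show ¬ i.val = 0 by omega),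
    if_neg (show ¬ i.val = Jv n j by omega),
    if_neg (show ¬ i.val = 2*n+3 by omega), if_pos h]

lemma extB_mid (j : Fin (2*n+2)) (g : Fin (2*n) → Fin (2*n)) (d : Fin (2*n)) {i : Fin (2*n+4)}
    (h : i.val = insF (av n j) (bv n j) d.val) :
    (extB n j g i).val = insF (av n j) (bv n j) (g d).val := by
  obtain ⟨p1, p2, p3, p4, q1, q2, q3, q4, q5, q6, q7⟩ := jk n j
  obtain ⟨r1, r2, r3, r4⟩ := ins_bounds p1 p2 p3 p4 d.isLt
  have hdel : delF (av n j) (bv n j) i.val = d.val := by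
    rw [h]; exact del_ins p1 p2 p3 p4 d.isLt
  have h5 : delF (av n j) (bv n j) i.val < 2*n := by rw [hdel]; exact d.isLt
  simp only [extB, if_neg (show ¬ i.val = 0 by omega),
    if_neg (show ¬ i.val = Jv n j by omega),
    if_neg (show ¬ i.val = 2*n+3 by omega),
    if_neg (show ¬ i.val = Kv n j by omega), dif_pos h5]
  have e : (⟨delF (av n j) (bv n j) i.val, h5⟩ : Fin (2*n)) = d := Fin.ext hdel
  rw [e]

lemma cases_of (j : Fin (2*n+2)) (i : Fin (2*n+4)) :
    i.val = 0 ∨ i.val = Jv n j ∨ i.val = 2*n+3 ∨ i.val = Kv n j ∨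
      ∃ d : Fin (2*n), i.val = insF (av n j) (bv n j) d.val := by
  obtain ⟨p1, p2, p3, p4, q1, q2, q3, q4, q5, q6, q7⟩ := jk n j
  have hi := i.isLt
  by_cases h0 : i.val = 0
  · exact Or.inl h0
  by_cases hJ : i.val = Jv n j
  · exact Or.inr (Or.inl hJ)
  by_cases hl : i.val = 2*n+3
  · exact Or.inr (Or.inr (Or.inl hl))
  by_cases hK : i.val = Kv n j
  · exact Or.inr (Or.inr (Or.inr (Or.inl hK)))
  refine Or.inr (Or.inr (Or.inr (Or.inr ⟨⟨delF (av n j) (bv n j) i.val,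
    del_bounds p1 p2 p3 p4 (by omega) (by omega) (by omega) (by omega)⟩, ?_⟩)))
  exact (ins_del p1 p2 p3 p4 (by omega) (by omega) (by omega) (by omega)).symm

lemma extB_props (j : Fin (2*n+2)) (g : Fin (2*n) → Fin (2*n))
    (hinv : Function.Involutive g) (hf : ∀ i, g i ≠ i) (hr : ∀ i, g i.rev = (g i).rev) :
    Function.Involutive (extB n j g) ∧ (∀ i, extB n j g i ≠ i) ∧
      (∀ i : Fin (2*n+4), extB n j g i.rev = (extB n j g i).rev) := by
  obtain ⟨p1, p2, p3, p4, q1, q2, q3, q4, q5, q6, q7⟩ := jk n j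
  refine ⟨?_, ?_, ?_⟩
  · intro i
    have hi := i.isLt
    rcases cases_of j i with h | h | h | h | ⟨d, h⟩
    · have e1 := extB_zero j g h
      have e2 := extB_J j g e1
      exact Fin.ext (by omega)
    · have e1 := extB_J j g h
      have e2 := extB_zero j g e1
      exact Fin.ext (by omega)
    · have e1 := extB_last j g h
      have e2 := extB_K j g e1
      exact Fin.ext (by omega)
    · have e1 := extB_K j g h
      have e2 := extB_last j g e1
      exact Fin.ext (by omega)
    · have e1 := extB_mid j g d h
      have e2 := extB_mid j g (g d) e1
      rw [hinv d] at e2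
      exact Fin.ext (by omega)
  · intro i hcon
    have hi := i.isLt
    have hv := congrArg Fin.val hcon
    rcases cases_of j i with h | h | h | h | ⟨d, h⟩
    · rw [extB_zero j g h] at hv; omega
    · rw [extB_J j g h] at hv; omega
    · rw [extB_last j g h] at hv; omega
    · rw [extB_K j g h] at hv; omega
    · rw [extB_mid j g d h] at hv
      have hd : (g d).val = d.val := by
        have := congrArg (delF (av n j) (bv n j)) (hv.trans h)
        rwa [del_ins p1 p2 p3 p4 (g d).isLt, del_ins p1 p2 p3 p4 d.isLt] at this
      exact hf d (Fin.ext hd)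
  · intro i
    have hi := i.isLt
    have hrev : (i.rev).val = 2*n+3 - i.val := by rw [Fin.val_rev]; omega
    apply Fin.ext
    rw [Fin.val_rev]
    rcases cases_of j i with h | h | h | h | ⟨d, h⟩
    · rw [extB_zero j g h, extB_last j g (show (i.rev).val = 2*n+3 by omega)]
      omega
    · rw [extB_J j g h, extB_K j g (show (i.rev).val = Kv n j by omega)]
      omega
    · rw [extB_last j g h, extB_zero j g (show (i.rev).val = 0 by omega)]
      omega
    · rw [extB_K j g h, extB_J j g (show (i.rev).val = Jv n j by omega)]
      omega
    · obtain ⟨r1, r2, r3, r4⟩ := ins_bounds p1 p2 p3 p4 d.isLt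
      have hdr : (d.rev).val = 2*n - 1 - d.val := by rw [Fin.val_rev]; omega
      have hinsrev := ins_rev p1 p2 p3 p4 d.isLt
      have hir : (i.rev).val = insF (av n j) (bv n j) (d.rev).val := by
        rw [hdr, hinsrev]; omega
      have e1 := extB_mid j g d h
      have e2 := extB_mid j g d.rev hir
      have e3 : (g d.rev).val = 2*n - 1 - (g d).val := by
        rw [congrArg Fin.val (hr d), Fin.val_rev]
        omega
      rw [e3, ins_rev p1 p2 p3 p4 (g d).isLt] at e2
      have := (ins_bounds p1 p2 p3 p4 (g d).isLt).2.1
      omega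



variable {n : ℕ}

def extA (n : ℕ) (g : Fin (2*n+2) → Fin (2*n+2)) : Fin (2*n+4) → Fin (2*n+4) := fun i =>
  if i.val = 0 then ⟨2*n+3, by omega⟩
  else if i.val = 2*n+3 then ⟨0, by omega⟩
  else ⟨(g ⟨(i.val - 1) % (2*n+2), Nat.mod_lt _ (by omega)⟩).val + 1,
    by have := (g ⟨(i.val - 1) % (2*n+2), Nat.mod_lt _ (by omega)⟩).isLt; omega⟩

lemma extA_zero (g : Fin (2*n+2) → Fin (2*n+2)) {i : Fin (2*n+4)} (h : i.val = 0) :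
    (extA n g i).val = 2*n+3 := by
  simp only [extA, if_pos h]

lemma extA_last (g : Fin (2*n+2) → Fin (2*n+2)) {i : Fin (2*n+4)} (h : i.val = 2*n+3) :
    (extA n g i).val = 0 := by
  have h0 : ¬ i.val = 0 := by omega
  simp only [extA, if_neg h0, if_pos h]

lemma extA_mid (g : Fin (2*n+2) → Fin (2*n+2)) (j : Fin (2*n+2)) {i : Fin (2*n+4)}
    (hij : i.val = j.val + 1) :
    (extA n g i).val = (g j).val + 1 := by
  have hj := j.isLt
  have h0 : ¬ i.val = 0 := by omega
  have h1 : ¬ i.val = 2*n+3 := by omega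
  simp only [extA, if_neg h0, if_neg h1]
  have e : (⟨(i.val - 1) % (2*n+2), Nat.mod_lt _ (by omega)⟩ : Fin (2*n+2)) = j :=
    Fin.ext (show (i.val - 1) % (2*n+2) = j.val by rw [hij, Nat.add_sub_cancel]; exact Nat.mod_eq_of_lt hj)
  rw [e]

lemma extA_props (g : Fin (2*n+2) → Fin (2*n+2))
    (hinv : Function.Involutive g) (hf : ∀ i, g i ≠ i) (hr : ∀ i, g i.rev = (g i).rev) :
    Function.Involutive (extA n g) ∧ (∀ i, extA n g i ≠ i) ∧
      (∀ i : Fin (2*n+4), extA n g i.rev = (extA n g i).rev) := by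
  refine ⟨?_, ?_, ?_⟩
  · intro i
    have hi := i.isLt
    by_cases h0 : i.val = 0
    · exact Fin.ext (by rw [extA_last g (extA_zero g h0), h0])
    · by_cases h1 : i.val = 2*n+3
      · exact Fin.ext (by rw [extA_zero g (extA_last g h1), h1])
      · set j : Fin (2*n+2) := ⟨i.val - 1, by omega⟩ with hjdef
        have hj : j.val = i.val - 1 := rfl
        have e1 : (extA n g i).val = (g j).val + 1 := extA_mid g j (by omega)
        have e2 : (extA n g (extA n g i)).val = (g (g j)).val + 1 := extA_mid g (g j) e1
        rw [hinv j] at e2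
        exact Fin.ext (by omega)
  · intro i h
    have hi := i.isLt
    have hv := congrArg Fin.val h
    by_cases h0 : i.val = 0
    · rw [extA_zero g h0] at hv; omega
    · by_cases h1 : i.val = 2*n+3
      · rw [extA_last g h1] at hv; omega
      · set j : Fin (2*n+2) := ⟨i.val - 1, by omega⟩ with hjdef
        have hj : j.val = i.val - 1 := rfl
        have e1 : (extA n g i).val = (g j).val + 1 := extA_mid g j (by omega)
        have e2 : (g j).val ≠ j.val := fun hc => hf j (Fin.ext hc)
        omega
  · intro i
    have hi := i.isLt
    have hrev : (i.rev).val = 2*n+3 - i.val := by rw [Fin.val_rev]; omega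
    apply Fin.ext
    rw [Fin.val_rev]
    by_cases h0 : i.val = 0
    · rw [extA_zero g h0, extA_last g (show (i.rev).val = 2*n+3 by omega)]
      omega
    · by_cases h1 : i.val = 2*n+3
      · rw [extA_last g h1, extA_zero g (show (i.rev).val = 0 by omega)]
        omega
      · set j : Fin (2*n+2) := ⟨i.val - 1, by omega⟩ with hjdef
        have hj : j.val = i.val - 1 := rfl
        have hjr : (j.rev).val = 2*n+1 - j.val := by rw [Fin.val_rev]; omega
        have e1 : (extA n g i).val = (g j).val + 1 := extA_mid g j (by omega)
        have e2 : (extA n g i.rev).val = (g j.rev).val + 1 := extA_mid g j.rev (by omega)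
        have e3 : (g j.rev).val = ((g j).rev).val := congrArg Fin.val (hr j)
        have e4 := (g j).isLt
        rw [Fin.val_rev] at e3
        omega


variable {n : ℕ}

def embA (n : ℕ) (i : Fin (2*n+2)) : Fin (2*n+4) := ⟨i.val+1, by have := i.isLt; omega⟩

lemma embA_val (i : Fin (2*n+2)) : (embA n i).val = i.val + 1 := rfl

def gA (n : ℕ) (u : Fin (2*n+4) → Fin (2*n+4)) : Fin (2*n+2) → Fin (2*n+2) := fun i =>
  ⟨((u (embA n i)).val - 1) % (2*n+2), Nat.mod_lt _ (by omega)⟩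

def insB (n : ℕ) (j : Fin (2*n+2)) (d : Fin (2*n)) : Fin (2*n+4) :=
  ⟨insF (av n j) (bv n j) d.val, by
    obtain ⟨p1, p2, p3, p4, -⟩ := jk n j
    have := (ins_bounds p1 p2 p3 p4 d.isLt).2.1
    omega⟩

lemma insB_val (j : Fin (2*n+2)) (d : Fin (2*n)) :
    (insB n j d).val = insF (av n j) (bv n j) d.val := rfl

def gB (n : ℕ) (j : Fin (2*n+2)) (u : Fin (2*n+4) → Fin (2*n+4)) : Fin (2*n) → Fin (2*n) :=
  fun i =>
  if h : delF (av n j) (bv n j) (u (insB n j i)).val < 2*n then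
    ⟨delF (av n j) (bv n j) (u (insB n j i)).val, h⟩
  else i

lemma gB_val (j : Fin (2*n+2)) (u : Fin (2*n+4) → Fin (2*n+4)) (i : Fin (2*n))
    (h : delF (av n j) (bv n j) (u (insB n j i)).val < 2*n) :
    (gB n j u i).val = delF (av n j) (bv n j) (u (insB n j i)).val := by
  simp only [gB, dif_pos h]

def phi (n : ℕ) : SymFun (2*n+2) ⊕ (Fin (2*n+2) × SymFun (2*n)) → SymFun (2*n+4)
  | .inl g => ⟨extA n g.1, extA_props g.1 g.2.1 g.2.2.1 g.2.2.2⟩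
  | .inr (j, g) => ⟨extB n j g.1, extB_props j g.1 g.2.1 g.2.2.1 g.2.2.2⟩

lemma phi_inj : Function.Injective (phi n) := by
  intro x y h
  rcases x with g | ⟨j, g⟩ <;> rcases y with g' | ⟨j', g'⟩
  · have hfun : extA n g.1 = extA n g'.1 := congrArg Subtype.val h
    congr 1
    apply Subtype.ext; funext i
    have e1 : (extA n g.1 (embA n i)).val = (g.1 i).val + 1 := extA_mid g.1 i (embA_val i)
    have e2 : (extA n g'.1 (embA n i)).val = (g'.1 i).val + 1 := extA_mid g'.1 i (embA_val i)
    have := congrArg Fin.val (congrFun hfun (embA n i))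
    exact Fin.ext (by omega)
  · exfalso
    have hfun : extA n g.1 = extB n j' g'.1 := congrArg Subtype.val h
    obtain ⟨p1, p2, p3, p4, q1, q2, q3, q4, q5, q6, q7⟩ := jk n j'
    have e1 : (extA n g.1 ⟨0, by omega⟩).val = 2*n+3 := extA_zero g.1 rfl
    have e2 : (extB n j' g'.1 ⟨0, by omega⟩).val = Jv n j' := extB_zero j' g'.1 rfl
    have := congrArg Fin.val (congrFun hfun ⟨0, by omega⟩)
    omega
  · exfalso
    have hfun : extB n j g.1 = extA n g'.1 := congrArg Subtype.val h
    obtain ⟨p1, p2, p3, p4, q1, q2, q3, q4, q5, q6, q7⟩ := jk n j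
    have e1 : (extA n g'.1 ⟨0, by omega⟩).val = 2*n+3 := extA_zero g'.1 rfl
    have e2 : (extB n j g.1 ⟨0, by omega⟩).val = Jv n j := extB_zero j g.1 rfl
    have := congrArg Fin.val (congrFun hfun ⟨0, by omega⟩)
    omega
  · have hfun : extB n j g.1 = extB n j' g'.1 := congrArg Subtype.val h
    obtain ⟨p1, p2, p3, p4, q1, q2, q3, q4, q5, q6, q7⟩ := jk n j
    have e1 : (extB n j g.1 ⟨0, by omega⟩).val = Jv n j := extB_zero j g.1 rfl
    have e2 : (extB n j' g'.1 ⟨0, by omega⟩).val = Jv n j' := extB_zero j' g'.1 rfl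
    have ej : j = j' := by
      have := congrArg Fin.val (congrFun hfun ⟨0, by omega⟩)
      have hJ : Jv n j = Jv n j' := by omega
      unfold Jv at hJ
      exact Fin.ext (by omega)
    subst ej
    congr 2
    apply Subtype.ext; funext i
    have e3 : (extB n j g.1 (insB n j i)).val = insF (av n j) (bv n j) (g.1 i).val :=
      extB_mid j g.1 i (insB_val j i)
    have e4 : (extB n j g'.1 (insB n j i)).val = insF (av n j) (bv n j) (g'.1 i).val :=
      extB_mid j g'.1 i (insB_val j i)
    have e5 := congrArg Fin.val (congrFun hfun (insB n j i))
    have e6 : insF (av n j) (bv n j) (g.1 i).val = insF (av n j) (bv n j) (g'.1 i).val := by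
      omega
    have e7 := congrArg (delF (av n j) (bv n j)) e6
    rw [del_ins p1 p2 p3 p4 (g.1 i).isLt, del_ins p1 p2 p3 p4 (g'.1 i).isLt] at e7
    exact Fin.ext e7

lemma surjA (u : Fin (2*n+4) → Fin (2*n+4)) (hinv : Function.Involutive u)
    (hf : ∀ i, u i ≠ i) (hrev : ∀ i, u i.rev = (u i).rev)
    (hc : (u ⟨0, by omega⟩).val = 2*n+3) :
    ∃ g : SymFun (2*n+2), extA n g.1 = u := by
  have h0 : u ⟨0, by omega⟩ = ⟨2*n+3, by omega⟩ := Fin.ext hc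
  have hlast : u ⟨2*n+3, by omega⟩ = ⟨0, by omega⟩ := by
    have := hinv ⟨0, by omega⟩
    rwa [h0] at this
  have key : ∀ i : Fin (2*n+4), 1 ≤ i.val → i.val ≤ 2*n+2 →
      1 ≤ (u i).val ∧ (u i).val ≤ 2*n+2 := by
    intro i h1 h2
    have hui := (u i).isLt
    have a1 : (u i).val ≠ 0 := by
      intro hcon
      have : i = u ⟨0, by omega⟩ := by rw [← Fin.ext hcon (b := ⟨0, by omega⟩), hinv i]
      rw [h0] at this
      have : i.val = 2*n+3 := congrArg Fin.val this
      omega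
    have a2 : (u i).val ≠ 2*n+3 := by
      intro hcon
      have : i = u ⟨2*n+3, by omega⟩ := by rw [← Fin.ext hcon (b := ⟨2*n+3, by omega⟩), hinv i]
      rw [hlast] at this
      have : i.val = 0 := congrArg Fin.val this
      omega
    omega
  have gval : ∀ i : Fin (2*n+2), (gA n u i).val = (u (embA n i)).val - 1 := by
    intro i
    have := key (embA n i) (by rw [embA_val]; omega) (by rw [embA_val]; have := i.isLt; omega)
    exact Nat.mod_eq_of_lt (by omega)
  have kk : ∀ i : Fin (2*n+2), 1 ≤ (u (embA n i)).val ∧ (u (embA n i)).val ≤ 2*n+2 :=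
    fun i => key (embA n i) (by rw [embA_val]; omega) (by rw [embA_val]; have := i.isLt; omega)
  have hemb : ∀ i : Fin (2*n+2), embA n (gA n u i) = u (embA n i) := by
    intro i
    have := kk i
    exact Fin.ext (by rw [embA_val, gval i]; omega)
  have ginv : Function.Involutive (gA n u) := by
    intro i
    have k1 := kk i
    have e := gval (gA n u i)
    rw [hemb i, hinv (embA n i), embA_val] at e
    exact Fin.ext (by omega)
  have gfpf : ∀ i, gA n u i ≠ i := by
    intro i hcon
    have k1 := kk i
    have hv := congrArg Fin.val hcon
    rw [gval i] at hv
    apply hf (embA n i)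
    exact Fin.ext (by rw [embA_val]; omega)
  have grev : ∀ i : Fin (2*n+2), gA n u i.rev = (gA n u i).rev := by
    intro i
    have hi := i.isLt
    have k1 := kk i
    have erev : embA n i.rev = (embA n i).rev := by
      apply Fin.ext
      simp only [embA_val, Fin.val_rev]
      omega
    have e1 := gval i.rev
    rw [erev, hrev (embA n i)] at e1
    have e2 := congrArg Fin.val (hrev (embA n i))
    apply Fin.ext
    simp only [Fin.val_rev] at e1 ⊢
    rw [e1, gval i]
    omega
  refine ⟨⟨gA n u, ginv, gfpf, grev⟩, ?_⟩
  funext i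
  have hi := i.isLt
  apply Fin.ext
  by_cases hi0 : i.val = 0
  · rw [extA_zero _ hi0]
    have hiz : i = ⟨0, by omega⟩ := Fin.ext hi0
    rw [hiz, hc]
  · by_cases hi1 : i.val = 2*n+3
    · rw [extA_last _ hi1]
      have hiz : i = ⟨2*n+3, by omega⟩ := Fin.ext hi1
      rw [hiz, hlast]
    · set d : Fin (2*n+2) := ⟨i.val - 1, by omega⟩ with hddef
      have hd : d.val = i.val - 1 := rfl
      have e1 : (extA n (gA n u) i).val = (gA n u d).val + 1 := extA_mid _ d (by omega)
      have e2 : embA n d = i := Fin.ext (by rw [embA_val]; omega)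
      have k1 := kk d
      rw [e1, gval d, e2]
      rw [e2] at k1
      omega

lemma surjB (u : Fin (2*n+4) → Fin (2*n+4)) (hinv : Function.Involutive u)
    (hf : ∀ i, u i ≠ i) (hrev : ∀ i, u i.rev = (u i).rev)
    (hc : ¬ (u ⟨0, by omega⟩).val = 2*n+3) :
    ∃ (j : Fin (2*n+2)) (g : SymFun (2*n)), extB n j g.1 = u := by
  have hu0 := (u ⟨0, by omega⟩).isLt
  have hJ1 : 1 ≤ (u ⟨0, by omega⟩).val := by
    have : (u ⟨0, by omega⟩).val ≠ 0 := fun hh => hf ⟨0, by omega⟩ (Fin.ext hh)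
    omega
  set j : Fin (2*n+2) := ⟨(u ⟨0, by omega⟩).val - 1, by omega⟩ with hjdef
  have hjval : j.val = (u ⟨0, by omega⟩).val - 1 := rfl
  obtain ⟨p1, p2, p3, p4, q1, q2, q3, q4, q5, q6, q7⟩ := jk n j
  have hJv : Jv n j = (u ⟨0, by omega⟩).val := by unfold Jv; omega
  have hrev0 : ((⟨0, by omega⟩ : Fin (2*n+4)).rev).val = 2*n+3 := by
    rw [Fin.val_rev]
    show 2*n+4 - (0+1) = 2*n+3
    omega
  have w0 : (u ⟨0, by omega⟩).val = Jv n j := hJv.symm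
  have wJ : ∀ i : Fin (2*n+4), i.val = Jv n j → (u i).val = 0 := by
    intro i hi
    have : i = u ⟨0, by omega⟩ := Fin.ext (by omega)
    rw [this, hinv]
  have wL : ∀ i : Fin (2*n+4), i.val = 2*n+3 → (u i).val = Kv n j := by
    intro i hi
    have : i = (⟨0, by omega⟩ : Fin (2*n+4)).rev := Fin.ext (by omega)
    rw [this, hrev]
    rw [Fin.val_rev]
    omega
  have wK : ∀ i : Fin (2*n+4), i.val = Kv n j → (u i).val = 2*n+3 := by
    intro i hi
    have h1 : ((⟨0, by omega⟩ : Fin (2*n+4)).rev).val = 2*n+3 := hrev0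
    have h2 : (u ((⟨0, by omega⟩ : Fin (2*n+4)).rev)).val = Kv n j :=
      wL _ hrev0
    have : i = u ((⟨0, by omega⟩ : Fin (2*n+4)).rev) := Fin.ext (by omega)
    rw [this, hinv]
    omega
  have key : ∀ i : Fin (2*n+4), 1 ≤ i.val → i.val ≤ 2*n+2 →
      i.val ≠ Jv n j → i.val ≠ Kv n j →
      1 ≤ (u i).val ∧ (u i).val ≤ 2*n+2 ∧ (u i).val ≠ Jv n j ∧ (u i).val ≠ Kv n j := by
    intro i h1 h2 h3 h4
    have hui := (u i).isLt
    have a1 : (u i).val ≠ 0 := by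
      intro hcon
      have : i = u ⟨0, by omega⟩ := by
        rw [← hinv i]
        exact congrArg u (Fin.ext hcon)
      have := congrArg Fin.val this
      omega
    have a2 : (u i).val ≠ Jv n j := by
      intro hcon
      have e := wJ (u i) hcon
      rw [hinv i] at e
      omega
    have a3 : (u i).val ≠ 2*n+3 := by
      intro hcon
      have e := wL (u i) hcon
      rw [hinv i] at e
      omega
    have a4 : (u i).val ≠ Kv n j := by
      intro hcon
      have e := wK (u i) hcon
      rw [hinv i] at e
      omega
    omega
  have keyd : ∀ d : Fin (2*n), 1 ≤ (u (insB n j d)).val ∧ (u (insB n j d)).val ≤ 2*n+2 ∧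
      (u (insB n j d)).val ≠ Jv n j ∧ (u (insB n j d)).val ≠ Kv n j := by
    intro d
    obtain ⟨r1, r2, r3, r4⟩ := ins_bounds p1 p2 p3 p4 d.isLt
    exact key (insB n j d) (by rw [insB_val]; omega) (by rw [insB_val]; omega)
      (by rw [insB_val]; omega) (by rw [insB_val]; omega)
  have hdel : ∀ d : Fin (2*n), delF (av n j) (bv n j) (u (insB n j d)).val < 2*n := by
    intro d
    obtain ⟨k1, k2, k3, k4⟩ := keyd d
    exact del_bounds p1 p2 p3 p4 k1 k2 (by omega) (by omega)
  have guv : ∀ d : Fin (2*n),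
      insF (av n j) (bv n j) (gB n j u d).val = (u (insB n j d)).val := by
    intro d
    obtain ⟨k1, k2, k3, k4⟩ := keyd d
    rw [gB_val j u d (hdel d)]
    exact ins_del p1 p2 p3 p4 k1 k2 (by omega) (by omega)
  have hemb : ∀ d : Fin (2*n), insB n j (gB n j u d) = u (insB n j d) := by
    intro d
    exact Fin.ext (by rw [insB_val]; exact guv d)
  have ginv : Function.Involutive (gB n j u) := by
    intro d
    have e := gB_val j u (gB n j u d) (by rw [hemb d, hinv (insB n j d), insB_val, del_ins p1 p2 p3 p4 d.isLt]; exact d.isLt)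
    rw [hemb d, hinv (insB n j d), insB_val, del_ins p1 p2 p3 p4 d.isLt] at e
    exact Fin.ext e
  have gfpf : ∀ d, gB n j u d ≠ d := by
    intro d hcon
    apply hf (insB n j d)
    apply Fin.ext
    rw [← guv d, hcon, insB_val]
  have grev : ∀ d : Fin (2*n), gB n j u d.rev = (gB n j u d).rev := by
    intro d
    have hd := d.isLt
    obtain ⟨k1, k2, k3, k4⟩ := keyd d
    have hdr : (d.rev).val = 2*n - 1 - d.val := by rw [Fin.val_rev]; omega
    have einsb : insB n j d.rev = (insB n j d).rev := by
      apply Fin.ext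
      rw [insB_val, hdr, ins_rev p1 p2 p3 p4 d.isLt, Fin.val_rev, insB_val]
      have := (ins_bounds p1 p2 p3 p4 d.isLt).2.1
      omega
    have e1 := gB_val j u d.rev (hdel d.rev)
    rw [einsb, hrev (insB n j d)] at e1
    have e2 : ((u (insB n j d)).rev).val = 2*n+3 - (u (insB n j d)).val := by
      rw [Fin.val_rev]; omega
    rw [e2, del_rev p1 p2 p3 p4 k1 k2 (by omega) (by omega)] at e1
    have e3 := gB_val j u d (hdel d)
    apply Fin.ext
    rw [e1, Fin.val_rev, e3]
    have := hdel d
    omega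
  refine ⟨j, ⟨gB n j u, ginv, gfpf, grev⟩, ?_⟩
  funext i
  have hi := i.isLt
  apply Fin.ext
  rcases cases_of j i with h | h | h | h | ⟨d, h⟩
  · rw [extB_zero j _ h, show i = (⟨0, by omega⟩ : Fin (2*n+4)) from Fin.ext h]
    omega
  · rw [extB_J j _ h, (wJ i h)]
  · rw [extB_last j _ h, (wL i h)]
  · rw [extB_K j _ h, (wK i h)]
  · rw [extB_mid j _ d h, guv d,
      show i = insB n j d from Fin.ext (h.trans (insB_val j d).symm)]

lemma phi_surj : Function.Surjective (phi n) := by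
  intro u
  obtain ⟨uf, h1, h2, h3⟩ := u
  by_cases hc : (uf ⟨0, by omega⟩).val = 2*n+3
  · obtain ⟨g, hg⟩ := surjA uf h1 h2 h3 hc
    exact ⟨Sum.inl g, Subtype.ext hg⟩
  · obtain ⟨j, g, hg⟩ := surjB uf h1 h2 h3 hc
    exact ⟨Sum.inr (j, g), Subtype.ext hg⟩

lemma card_rec (n : ℕ) :
    Nat.card (SymFun (2*n+4)) =
      Nat.card (SymFun (2*n+2)) + (2*n+2) * Nat.card (SymFun (2*n)) := by
  rw [← Nat.card_eq_of_bijective (phi n) ⟨phi_inj, phi_surj⟩]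
  rw [Nat.card_sum, Nat.card_prod, Nat.card_eq_fintype_card (α := Fin (2*n+2)),
    Fintype.card_fin]

def F (n b : ℕ) : ℚ :=
  if 2 * b ≤ n then (n.factorial : ℚ) / ((n - 2*b).factorial * b.factorial) else 0

def Aq (n : ℕ) : ℚ := ∑ b ∈ Finset.range (n + 1), F n b

lemma F_zero (n : ℕ) : F n 0 = 1 := by
  unfold F
  rw [if_pos (by omega)]
  have h : (n.factorial : ℚ) ≠ 0 := Nat.cast_ne_zero.2 n.factorial_ne_zero
  rw [show n - 2*0 = n from rfl, Nat.factorial_zero, Nat.cast_one, mul_one]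
  exact div_self h

lemma F_succ (n b : ℕ) : F (n+2) (b+1) = F (n+1) (b+1) + (2*n+2) * F n b := by
  unfold F
  rcases le_or_gt (2*(b+1)) (n+1) with h | h
  · rw [if_pos (by omega), if_pos h, if_pos (by omega)]
    obtain ⟨m, rfl⟩ : ∃ m, n = 2*b+1+m := ⟨n - (2*b+1), by omega⟩
    rw [show (2*b+1+m+2) - 2*(b+1) = m+1 by omega, show (2*b+1+m+1) - 2*(b+1) = m by omega,
      show (2*b+1+m) - 2*b = m+1 by omega]
    have f1 : ((2*b+1+m+2).factorial : ℚ)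
        = (2*(b:ℚ)+1+m+2) * ((2*(b:ℚ)+1+m+1) * ((2*b+1+m).factorial : ℚ)) := by
      rw [show 2*b+1+m+2 = (2*b+1+m+1)+1 from rfl, Nat.factorial_succ,
        show 2*b+1+m+1 = (2*b+1+m)+1 from rfl, Nat.factorial_succ]
      push_cast
      ring
    have f2 : ((2*b+1+m+1).factorial : ℚ) = (2*(b:ℚ)+1+m+1) * ((2*b+1+m).factorial : ℚ) := by
      rw [show 2*b+1+m+1 = (2*b+1+m)+1 from rfl, Nat.factorial_succ]
      push_cast
      ring
    have f3 : ((m+1).factorial : ℚ) = ((m:ℚ)+1) * (m.factorial : ℚ) := by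
      rw [Nat.factorial_succ]; push_cast; ring
    have f4 : ((b+1).factorial : ℚ) = ((b:ℚ)+1) * (b.factorial : ℚ) := by
      rw [Nat.factorial_succ]; push_cast; ring
    rw [f1, f2, f3, f4]
    have hm : (m.factorial : ℚ) ≠ 0 := Nat.cast_ne_zero.2 m.factorial_ne_zero
    have hb : (b.factorial : ℚ) ≠ 0 := Nat.cast_ne_zero.2 b.factorial_ne_zero
    have hnf : ((2*b+1+m).factorial : ℚ) ≠ 0 := Nat.cast_ne_zero.2 (Nat.factorial_ne_zero _)
    have hm1 : ((m:ℚ)+1) ≠ 0 := by positivity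
    have hb1 : ((b:ℚ)+1) ≠ 0 := by positivity
    field_simp
    push_cast
    ring
  · by_cases h2 : 2*(b+1) ≤ n+2
    · obtain rfl : n = 2*b := by omega
      rw [if_pos h2, if_neg (by omega), if_pos (by omega)]
      rw [show (2*b+2) - 2*(b+1) = 0 by omega, show 2*b - 2*b = 0 by omega]
      have f1 : ((2*b+2).factorial : ℚ)
          = (2*(b:ℚ)+2) * ((2*(b:ℚ)+1) * ((2*b).factorial : ℚ)) := by
        rw [show 2*b+2 = (2*b+1)+1 from rfl, Nat.factorial_succ,
          show 2*b+1 = (2*b)+1 from rfl, Nat.factorial_succ]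
        push_cast
        ring
      have f4 : ((b+1).factorial : ℚ) = ((b:ℚ)+1) * (b.factorial : ℚ) := by
        rw [Nat.factorial_succ]; push_cast; ring
      rw [f1, f4, Nat.factorial_zero]
      have hb : (b.factorial : ℚ) ≠ 0 := Nat.cast_ne_zero.2 b.factorial_ne_zero
      have hnf : ((2*b).factorial : ℚ) ≠ 0 := Nat.cast_ne_zero.2 (Nat.factorial_ne_zero _)
      have hb1 : ((b:ℚ)+1) ≠ 0 := by positivity
      field_simp
      push_cast
      ring
    · rw [if_neg h2, if_neg (by omega), if_neg (by omega)]
      ring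

lemma Aq_zero : Aq 0 = 1 := by
  rw [Aq, Finset.sum_range_one, F_zero]

lemma Aq_one : Aq 1 = 1 := by
  rw [Aq, Finset.sum_range_succ, Finset.sum_range_one, F_zero]
  have : F 1 1 = 0 := by unfold F; rw [if_neg (by omega)]
  rw [this, add_zero]

lemma Aq_rec (n : ℕ) : Aq (n+2) = Aq (n+1) + (2*n+2) * Aq n := by
  have hA2 : Aq (n+2) = ∑ b ∈ Finset.range (n+3), F (n+2) b := rfl
  have hA1 : Aq (n+1) = ∑ b ∈ Finset.range (n+2), F (n+1) b := rfl
  have hA0 : Aq n = ∑ b ∈ Finset.range (n+1), F n b := rfl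
  rw [hA2, hA1, hA0, Finset.sum_range_succ' (fun b => F (n+2) b) (n+2),
    Finset.sum_range_succ' (fun b => F (n+1) b) (n+1)]
  have e1 : ∑ i ∈ Finset.range (n+2), F (n+2) (i+1)
      = ∑ i ∈ Finset.range (n+2), (F (n+1) (i+1) + (2*n+2) * F n i) :=
    Finset.sum_congr rfl fun i _ => F_succ n i
  rw [e1, Finset.sum_add_distrib, ← Finset.mul_sum]
  rw [Finset.sum_range_succ (fun i => F (n+1) (i+1)) (n+1),
    Finset.sum_range_succ (fun i => F n i) (n+1)]

  have z1 : F (n+1) (n+1+1) = 0 := by unfold F; rw [if_neg (by omega)]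
  have z2 : F n (n+1) = 0 := by unfold F; rw [if_neg (by omega)]
  have z3 : F (n+2) 0 = 1 := F_zero _
  have z4 : F (n+1) 0 = 1 := F_zero _
  rw [z1, z2, z3, z4]
  ring

lemma card_Aq : ∀ n : ℕ, (Nat.card (SymFun (2*n)) : ℚ) = Aq n
  | 0 => by
    rw [show 2*0 = 0 from rfl, card_zero, Aq_zero, Nat.cast_one]
    
  | 1 => by
    rw [show 2*1 = 2 from rfl, card_two, Aq_one, Nat.cast_one]
  | (k+2) => by
    have e1 := card_Aq (k+1)
    have e2 := card_Aq k
    rw [show 2*(k+1) = 2*k+2 by ring] at e1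
    rw [show 2*(k+2) = 2*k+4 by ring, card_rec k, Aq_rec k]
    push_cast
    rw [e1, e2]

end BsmAux

/-- The number `bsm_n` of bilaterally symmetric matchings on `[2n]` equals `n!`
times the coefficient of `t^n` in `exp(t + t²)`. -/
theorem bsm_egf (n : ℕ) :
    ((Nat.card {f : Equiv.Perm (Fin (2 * n)) // IsMatchingInv f ∧ IsBilatSym f}) : ℚ) =
      n.factorial * PowerSeries.coeff n expXplusX2 := by
  have hc : (n.factorial : ℚ) * PowerSeries.coeff n expXplusX2 = BsmAux.Aq n := by
    rw [expXplusX2, PowerSeries.coeff_mk, Finset.mul_sum]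
    rw [show BsmAux.Aq n = ∑ b ∈ Finset.range (n+1), BsmAux.F n b from rfl]
    refine Finset.sum_congr rfl fun b _ => ?_
    unfold BsmAux.F
    split_ifs with h
    · rw [mul_one_div]
    · rw [mul_zero]
  rw [hc, BsmAux.card_eq (2*n), BsmAux.card_Aq n]
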